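/- Let X be a real random variable with the exponential distribution of rate 1, let d > 0, τ ∈ ℝ, ρ > 0, R > 0 be real constants, set r = 2^R − 1, and let α₁ > 0, α₂ be real with α₂ − α₁·r > 0. Then ℙ( (α₂·d^{−τ}·X)/(α₁·d^{−τ}·X + 1/ρ) ≥ r and α₁·d^{−τ}·X·ρ ≥ r ) = exp( −max{ r·d^τ/(ρ(α₂ − α₁·r)), r·d^τ/(ρ·α₁) } ); i.e., the NOMA outage probability of the near user performing successive interference cancellation equals 1 − exp(−max{(2^R−1)d^τ/(ρ(α₂−α₁(2^R−1))), (2^R−1)d^τ/(ρα₁)}). -/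

import Mathlib

open MeasureTheory Filter

lemma stmt16_key {Ω : Type*} [MeasurableSpace Ω] (μ : Measure Ω) [IsProbabilityMeasure μ]
    (X : Ω → ℝ) (hXm : Measurable X)
    (hlaw : ∀ x : ℝ, 0 ≤ x → μ {ω | x < X ω} = ENNReal.ofReal (Real.exp (-x)))
    (m : ℝ) (hm : 0 < m) :
    μ {ω | m ≤ X ω} = ENNReal.ofReal (Real.exp (-m)) := by
  set s : ℕ → Set Ω := fun n => {ω | m - 1/(n+1) < X ω} with hs
  have hset : {ω | m ≤ X ω} = ⋂ n, s n := by
    ext ω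
    simp only [Set.mem_iInter, hs, Set.mem_setOf_eq]
    constructor
    · intro h n
      have : (0:ℝ) < 1/(n+1) := by positivity
      linarith
    · intro h
      by_contra hc
      push_neg at hc
      obtain ⟨n, hn⟩ := exists_nat_one_div_lt (show (0:ℝ) < m - X ω by linarith)
      have := h n
      linarith
  have hanti : Antitone s := by
    intro i j hij ω hω
    simp only [hs, Set.mem_setOf_eq] at *
    have h1 : (1:ℝ)/(j+1) ≤ 1/(i+1) := by
      apply one_div_le_one_div_of_le (by positivity)
      have : (i:ℝ) ≤ j := Nat.cast_le.mpr hij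
      linarith
    linarith
  have hmeas : ∀ n, NullMeasurableSet (s n) μ :=
    fun n => (measurableSet_lt measurable_const hXm).nullMeasurableSet
  have htend := tendsto_measure_iInter_atTop hmeas hanti ⟨0, measure_ne_top μ _⟩
  rw [hset]
  have htend2 : Tendsto (fun n : ℕ => μ (s n)) atTop
      (nhds (ENNReal.ofReal (Real.exp (-m)))) := by
    have hev : ∀ᶠ n : ℕ in atTop, μ (s n) = ENNReal.ofReal (Real.exp (-(m - 1/(n+1)))) := by
      obtain ⟨N, hN⟩ := exists_nat_one_div_lt hm
      filter_upwards [eventually_ge_atTop N] with n hn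
      apply hlaw
      have h1 : (1:ℝ)/(n+1) ≤ 1/(N+1) := by
        apply one_div_le_one_div_of_le (by positivity)
        have : (N:ℝ) ≤ n := Nat.cast_le.mpr hn
        linarith
      linarith
    have hlim : Tendsto (fun n : ℕ => ENNReal.ofReal (Real.exp (-(m - 1/(n+1))))) atTop
        (nhds (ENNReal.ofReal (Real.exp (-m)))) := by
      apply (ENNReal.continuous_ofReal.tendsto _).comp
      apply (Real.continuous_exp.tendsto _).comp
      have : Tendsto (fun n : ℕ => m - 1/((n:ℝ)+1)) atTop (nhds m) := by
        have : Tendsto (fun n : ℕ => 1 / ((n:ℝ)+1)) atTop (nhds 0) := tendsto_one_div_add_atTop_nhds_zero_nat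
        simpa using (tendsto_const_nhds (x := m)).sub this
      simpa using this.neg
    exact hlim.congr' (hev.mono fun n h => h.symm)
  exact tendsto_nhds_unique htend htend2


lemma stmt16_iff (d τ ρ R r : ℝ) (hd : 0 < d) (hρ : 0 < ρ) (hR : 0 < R)
    (hr : r = (2 : ℝ) ^ R - 1)
    (α₁ α₂ : ℝ) (hα₁ : 0 < α₁) (hpos : 0 < α₂ - α₁ * r) (x : ℝ) :
    (r ≤ α₂ * d ^ (-τ) * x / (α₁ * d ^ (-τ) * x + 1 / ρ) ∧
           r ≤ α₁ * d ^ (-τ) * x * ρ) ↔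
    max (r * d ^ τ / (ρ * (α₂ - α₁ * r))) (r * d ^ τ / (ρ * α₁)) ≤ x := by
  have hrpos : 0 < r := by
    rw [hr]
    have : (1:ℝ) < (2:ℝ) ^ R := (Real.one_lt_rpow_iff_of_pos (by norm_num)).mpr (Or.inl ⟨by norm_num, hR⟩)
    linarith
  have he : (0:ℝ) < d ^ τ := Real.rpow_pos_of_pos hd τ
  have hc : d ^ (-τ) = (d ^ τ)⁻¹ := Real.rpow_neg hd.le τ
  set e := d ^ τ
  rw [hc]
  set a := r * e / (ρ * (α₂ - α₁ * r)) with ha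
  set b := r * e / (ρ * α₁) with hb
  have hbpos : 0 < b := by positivity
  have hapos : 0 < a := by positivity
  have h2 : r ≤ α₁ * e⁻¹ * x * ρ ↔ b ≤ x := by
    rw [hb, div_le_iff₀ (by positivity)]
    rw [show α₁ * e⁻¹ * x * ρ = x * (ρ * α₁) * e⁻¹ by ring]
    rw [le_mul_inv_iff₀ he]
  constructor
  · rintro ⟨h1', h2'⟩
    have hbx : b ≤ x := h2.mp h2'
    have hx : 0 < x := lt_of_lt_of_le hbpos hbx
    have hD : 0 < α₁ * e⁻¹ * x + 1 / ρ := by positivity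
    rw [le_div_iff₀ hD] at h1'
    have hax : a ≤ x := by
      rw [ha, div_le_iff₀ (by positivity)]
      have h := mul_le_mul_of_nonneg_right h1' (show (0:ℝ) ≤ e * ρ by positivity)
      have eq1 : r * (α₁ * e⁻¹ * x + 1/ρ) * (e * ρ) = r * α₁ * x * ρ + r * e := by
        field_simp
      have eq2 : α₂ * e⁻¹ * x * (e * ρ) = α₂ * x * ρ := by field_simp
      rw [eq1, eq2] at h
      linarith
    exact max_le hax hbx
  · intro hmx
    have hax : a ≤ x := le_trans (le_max_left _ _) hmx
    have hbx : b ≤ x := le_trans (le_max_right _ _) hmx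
    have hx : 0 < x := lt_of_lt_of_le hbpos hbx
    have hD : 0 < α₁ * e⁻¹ * x + 1 / ρ := by positivity
    refine ⟨?_, h2.mpr hbx⟩
    rw [le_div_iff₀ hD]
    rw [ha, div_le_iff₀ (by positivity)] at hax
    have hei : e⁻¹ * e = 1 := inv_mul_cancel₀ he.ne'
    have h := mul_le_mul_of_nonneg_right hax (show (0:ℝ) ≤ e⁻¹ * (1/ρ) by positivity)
    have eq1 : r * e * (e⁻¹ * (1/ρ)) = r * (1/ρ) := by field_simp
    have eq2 : x * (ρ * (α₂ - α₁ * r)) * (e⁻¹ * (1/ρ)) = (α₂ - α₁ * r) * e⁻¹ * x := by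
      field_simp
    rw [eq1, eq2] at h
    nlinarith [h]


/-- if X is exponential with rate 1, r = 2^R − 1, α₁ > 0 and
α₂ − α₁·r > 0, then the probability that the near user (performing SIC) decodes
both the far user's message and its own,
ℙ(α₂·d^{−τ}·X/(α₁·d^{−τ}·X + 1/ρ) ≥ r and α₁·d^{−τ}·X·ρ ≥ r),
equals exp(−max{r·d^τ/(ρ(α₂ − α₁·r)), r·d^τ/(ρ·α₁)}). -/
theorem stmt16 {Ω : Type*} [MeasurableSpace Ω] (μ : Measure Ω) [IsProbabilityMeasure μ]
    (X : Ω → ℝ) (hXm : Measurable X)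
    (hlaw : ∀ x : ℝ, 0 ≤ x → μ {ω | x < X ω} = ENNReal.ofReal (Real.exp (-x)))
    (d τ ρ R r : ℝ) (hd : 0 < d) (hρ : 0 < ρ) (hR : 0 < R)
    (hr : r = (2 : ℝ) ^ R - 1)
    (α₁ α₂ : ℝ) (hα₁ : 0 < α₁) (hpos : 0 < α₂ - α₁ * r) :
    μ {ω | r ≤ α₂ * d ^ (-τ) * X ω / (α₁ * d ^ (-τ) * X ω + 1 / ρ) ∧
           r ≤ α₁ * d ^ (-τ) * X ω * ρ} =
      ENNReal.ofReal (Real.exp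
        (-(max (r * d ^ τ / (ρ * (α₂ - α₁ * r))) (r * d ^ τ / (ρ * α₁))))) := by
  have hrpos : 0 < r := by
    rw [hr]
    have : (1:ℝ) < (2:ℝ) ^ R :=
      (Real.one_lt_rpow_iff_of_pos (by norm_num)).mpr (Or.inl ⟨by norm_num, hR⟩)
    linarith
  have he : (0:ℝ) < d ^ τ := Real.rpow_pos_of_pos hd τ
  have hm : 0 < max (r * d ^ τ / (ρ * (α₂ - α₁ * r))) (r * d ^ τ / (ρ * α₁)) :=
    lt_max_of_lt_right (by positivity)
  have hset : {ω | r ≤ α₂ * d ^ (-τ) * X ω / (α₁ * d ^ (-τ) * X ω + 1 / ρ) ∧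
           r ≤ α₁ * d ^ (-τ) * X ω * ρ}
      = {ω | max (r * d ^ τ / (ρ * (α₂ - α₁ * r))) (r * d ^ τ / (ρ * α₁)) ≤ X ω} := by
    ext ω
    exact stmt16_iff d τ ρ R r hd hρ hR hr α₁ α₂ hα₁ hpos (X ω)
  rw [hset]
  exact stmt16_key μ X hXm hlaw _ hm
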